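/- Let q = p^e with p an odd prime and let 1 \le k \le e. Then the map x \mapsto F_{2 p^k}(1,x) on F_q is a bijection if and only if gcd((p^k - 1)/2, q - 1) = 1. -/

import Mathlib

def F3 {K : Type*} [Field K] (x : K) : ℕ → K
  | 0 => 0
  | 1 => 1
  | (n + 2) => F3 x (n + 1) - x * F3 x n

lemma F3_root {K : Type*} [Field K] {R : Type*} [CommRing R] [Algebra K R]
    (x : K) (a : R) (hmul : a * (1 - a) = algebraMap K R x) :
    ∀ n, (a - (1 - a)) * algebraMap K R (F3 x n) = a ^ n - (1 - a) ^ n := by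
  have H : ∀ n, (a - (1 - a)) * algebraMap K R (F3 x n) = a ^ n - (1 - a) ^ n ∧
      (a - (1 - a)) * algebraMap K R (F3 x (n + 1)) = a ^ (n + 1) - (1 - a) ^ (n + 1) := by
    intro n
    induction n with
    | zero => simp [F3]
    | succ n ih =>
      refine ⟨ih.2, ?_⟩
      have h0 := ih.1
      have h1 := ih.2
      rw [show F3 x (n + 2) = F3 x (n + 1) - x * F3 x n from rfl, map_sub, map_mul]
      linear_combination h1 - (algebraMap K R x) * h0 + (a ^ n - (1 - a) ^ n) * hmul
  exact fun n => (H n).1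

lemma F3_quarter {K : Type*} [Field K] {x : K} (hx : 4 * x = 1) :
    ∀ n : ℕ, (2 : K) ^ n * F3 x (n + 1) = (n : K) + 1 := by
  have H : ∀ n : ℕ, ((2 : K) ^ n * F3 x (n + 1) = (n : K) + 1) ∧
      ((2 : K) ^ (n + 1) * F3 x (n + 2) = ((n : K) + 1) + 1) := by
    intro n
    induction n with
    | zero => norm_num [F3]
    | succ n ih =>
      refine ⟨by push_cast; exact ih.2, ?_⟩
      have h0 := ih.1
      have h1 := ih.2
      rw [show F3 x (n + 3) = F3 x (n + 2) - x * F3 x (n + 1) from rfl]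
      push_cast
      linear_combination 2 * h1 - (4 * x) * h0 - ((n : K) + 1) * hx
  exact fun n => (H n).1

lemma F3_formula {K : Type*} [Field K] (p k : ℕ) (hp : p.Prime) (hodd : p ≠ 2) [CharP K p]
    (hk1 : 1 ≤ k) (x : K) :
    F3 x (2 * p ^ k) = (1 - 4 * x) ^ ((p ^ k - 1) / 2) := by
  haveI : Fact p.Prime := ⟨hp⟩
  have hp3 : 3 ≤ p := by
    rcases hp.two_le.lt_or_eq with h | h
    · omega
    · omega
  have hpk3 : 3 ≤ p ^ k := le_trans hp3 (Nat.le_self_pow (by omega) p)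
  have hm1 : 1 ≤ (p ^ k - 1) / 2 := by omega
  have h2 : (2 : K) ≠ 0 := by
    rw [← Nat.cast_ofNat, Ne, CharP.cast_eq_zero_iff K p]
    intro h
    exact hodd ((Nat.prime_dvd_prime_iff_eq hp Nat.prime_two).mp h)
  have hpkodd : p ^ k = 2 * ((p ^ k - 1) / 2) + 1 := by
    obtain ⟨m, hm⟩ := (hp.odd_of_ne_two hodd).pow
    rw [hm] at hpk3 ⊢
    omega
  by_cases hx : (1 : K) - 4 * x = 0
  · have h4x : 4 * x = 1 := by linear_combination -hx
    have key := F3_quarter h4x (2 * p ^ k - 1)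
    rw [Nat.sub_add_cancel (by omega)] at key
    have hcast : ((2 * p ^ k - 1 : ℕ) : K) + 1 = 2 * (p : K) ^ k := by
      rw [Nat.cast_sub (by omega)]
      push_cast
      ring
    rw [hcast, CharP.cast_eq_zero K p, zero_pow (by omega), mul_zero] at key
    have hF : F3 x (2 * p ^ k) = 0 := by
      rcases mul_eq_zero.mp key with h | h
      · exact absurd h (pow_ne_zero _ h2)
      · exact h
    rw [hF, hx, zero_pow (by omega)]
  · set f : Polynomial K := Polynomial.X ^ 2 - Polynomial.X + Polynomial.C x with hf
    have hdeg : f.degree = 2 := by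
      rw [hf]
      compute_degree!
    haveI : Nontrivial (AdjoinRoot f) := AdjoinRoot.nontrivial f (by rw [hdeg]; norm_num)
    haveI : CharP (AdjoinRoot f) p := charP_of_injective_algebraMap' K p
    set R := AdjoinRoot f
    set a : R := AdjoinRoot.root f with ha
    have hroot : a ^ 2 - a + algebraMap K R x = 0 := by
      have := AdjoinRoot.eval₂_root f
      simp [hf] at this
      exact this
    have hmul : a * (1 - a) = algebraMap K R x := by linear_combination -hroot
    set u : R := a - (1 - a) with hu
    have hu2 : u ^ 2 = algebraMap K R (1 - 4 * x) := by
      rw [map_sub, map_mul, map_one, map_ofNat]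
      linear_combination 4 * hroot
    have hunit : IsUnit u := by
      apply IsUnit.of_mul_eq_one (algebraMap K R (1 - 4 * x)⁻¹ * u)
      rw [mul_comm, mul_assoc, ← pow_two, hu2, ← map_mul, inv_mul_cancel₀ hx, map_one]
    have main := F3_root x a hmul (2 * p ^ k)
    have hpow : a ^ (2 * p ^ k) - (1 - a) ^ (2 * p ^ k) = u * algebraMap K R ((1 - 4 * x) ^ ((p ^ k - 1) / 2)) := by
      have e1 : a ^ (2 * p ^ k) - (1 - a) ^ (2 * p ^ k)
          = (a ^ (p ^ k) - (1 - a) ^ (p ^ k)) * (a ^ (p ^ k) + (1 - a) ^ (p ^ k)) := by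
        rw [mul_comm 2 (p ^ k), pow_mul, pow_mul]
        ring
      have e2 : a ^ (p ^ k) - (1 - a) ^ (p ^ k) = u ^ (p ^ k) := (sub_pow_char_pow ..).symm
      have e3 : a ^ (p ^ k) + (1 - a) ^ (p ^ k) = 1 := by
        rw [← add_pow_char_pow, add_sub_cancel, one_pow]
      rw [e1, e2, e3, mul_one]
      conv_lhs => rw [hpkodd]
      rw [pow_succ, pow_mul, hu2, ← map_pow, mul_comm]
    rw [hpow] at main
    have := hunit.mul_left_cancel main
    exact (algebraMap K R).injective this

lemma pow_bijective_iff {K : Type*} [Field K] [Fintype K] (m : ℕ) (hm : 1 ≤ m) :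
    Function.Bijective (fun y : K => y ^ m) ↔ Nat.gcd m (Fintype.card K - 1) = 1 := by
  classical
  constructor
  · intro hbij
    by_contra hgcd
    obtain ⟨ℓ, hℓ, hℓdvd⟩ := Nat.exists_prime_and_dvd hgcd
    have hℓm : ℓ ∣ m := hℓdvd.trans (Nat.gcd_dvd_left _ _)
    have hℓc : ℓ ∣ Fintype.card Kˣ := by
      rw [Fintype.card_units]
      exact hℓdvd.trans (Nat.gcd_dvd_right _ _)
    haveI : Fact ℓ.Prime := ⟨hℓ⟩
    obtain ⟨g, hg⟩ := exists_prime_orderOf_dvd_card ℓ hℓc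
    have hg1 : g ≠ 1 := by
      intro h
      rw [h, orderOf_one] at hg
      exact hℓ.one_lt.ne' hg.symm
    have : (g : K) ^ m = (1 : K) ^ m := by
      obtain ⟨c, hc⟩ := hℓm
      rw [one_pow, hc, pow_mul, ← Units.val_pow_eq_pow_val, ← hg, pow_orderOf_eq_one,
        Units.val_one, one_pow]
    have := hbij.injective this
    exact hg1 (Units.ext (by simpa using this))
  · intro hgcd
    rw [Finite.injective_iff_bijective.symm]
    have hco : (Nat.card Kˣ).Coprime m := by
      rw [Nat.card_eq_fintype_card, Fintype.card_units, Nat.Coprime, Nat.gcd_comm]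
      exact hgcd
    have hubij := hco.pow_left_bijective
    intro a b hab
    simp only at hab
    rcases eq_or_ne a 0 with ha | ha
    · rcases eq_or_ne b 0 with hb | hb
      · rw [ha, hb]
      · rw [ha, zero_pow (by omega)] at hab
        exact absurd (pow_eq_zero_iff (by omega : m ≠ 0) |>.mp hab.symm) hb
    · rcases eq_or_ne b 0 with hb | hb
      · rw [hb, zero_pow (by omega)] at hab
        exact absurd (pow_eq_zero_iff (by omega : m ≠ 0) |>.mp hab) ha
      · have : Units.mk0 a ha ^ m = Units.mk0 b hb ^ m := by
          ext
          simpa using hab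
        have := hubij.injective this
        simpa using congrArg Units.val this

theorem stmt7 {K : Type*} [Field K] [Fintype K] (p e k : ℕ) (hp : p.Prime) (hodd : p ≠ 2)
    [CharP K p] (hcard : Fintype.card K = p ^ e) (hk1 : 1 ≤ k) (hke : k ≤ e) :
    Function.Bijective (fun x : K => F3 x (2 * p ^ k)) ↔
      Nat.gcd ((p ^ k - 1) / 2) (Fintype.card K - 1) = 1 := by
  haveI : Fact p.Prime := ⟨hp⟩
  have hp3 : 3 ≤ p := by
    have := hp.two_le; omega
  have hpk3 : 3 ≤ p ^ k := le_trans hp3 (Nat.le_self_pow (by omega) p)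
  have hm1 : 1 ≤ (p ^ k - 1) / 2 := by omega
  have h2 : (2 : K) ≠ 0 := by
    rw [← Nat.cast_ofNat, Ne, CharP.cast_eq_zero_iff K p]
    intro h
    exact hodd ((Nat.prime_dvd_prime_iff_eq hp Nat.prime_two).mp h)
  have h4 : (4 : K) ≠ 0 := by
    have : (4 : K) = 2 * 2 := by norm_num
    rw [this]
    exact mul_ne_zero h2 h2
  have haff : Function.Bijective (fun x : K => 1 - 4 * x) := by
    constructor
    · intro a b hab
      simp only at hab
      exact mul_left_cancel₀ h4 (by linear_combination -hab)
    · intro y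
      exact ⟨(1 - y) / 4, by field_simp; ring⟩
  have hfun : (fun x : K => F3 x (2 * p ^ k))
      = (fun y : K => y ^ ((p ^ k - 1) / 2)) ∘ (fun x : K => 1 - 4 * x) := by
    funext x
    exact F3_formula p k hp hodd hk1 x
  rw [hfun, Function.Bijective.of_comp_iff _ haff]
  exact pow_bijective_iff _ hm1
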